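/- If φ is a nonvanishing twice differentiable solution of -φ'' + U·φ = λ₀·φ, then ψ := 1/φ satisfies -ψ'' + Û·ψ = λ₀·ψ, where Û = U + 2(-log φ)''. In other words, the reciprocal of the factorization function is an eigenfunction of the partner Hamiltonian with the factorization energy. -/

import Mathlib

/-- if -φ'' + U·φ = λ₀·φ with φ nonvanishing, then ψ = 1/φ satisfies
-ψ'' + Û·ψ = λ₀·ψ with the partner potential Û = U - 2(log φ)''. -/
theorem reciprocal_eigenfunction_of_partner
    (U φ : ℝ → ℝ) (lam0 : ℝ)
    (hU : Continuous U)
    (hφ : Differentiable ℝ φ) (hφ' : Differentiable ℝ (deriv φ))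
    (hφ0 : ∀ x, φ x ≠ 0)
    (heig : ∀ x, -(deriv (deriv φ) x) + U x * φ x = lam0 * φ x)
    (Uhat ψ : ℝ → ℝ)
    (hUhat : Uhat = fun x => U x - 2 * deriv (deriv (fun y => Real.log (φ y))) x)
    (hψ : ψ = fun x => 1 / φ x) :
    ∀ x, -(deriv (deriv ψ) x) + Uhat x * ψ x = lam0 * ψ x := by
  subst hUhat hψ
  intro x
  have hlog1 : deriv (fun y => Real.log (φ y)) = fun y => deriv φ y / φ y := by
    funext y
    exact (((hφ y).hasDerivAt).log (hφ0 y)).deriv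
  have hlog2 : deriv (deriv (fun y => Real.log (φ y))) x
      = (deriv (deriv φ) x * φ x - deriv φ x * deriv φ x) / (φ x)^2 := by
    rw [hlog1]
    exact (((hφ' x).hasDerivAt).div ((hφ x).hasDerivAt) (hφ0 x)).deriv
  have hψ1 : deriv (fun y => 1 / φ y) = fun y => -(deriv φ y) / (φ y)^2 := by
    funext y
    have h := ((hasDerivAt_const y (1:ℝ)).div ((hφ y).hasDerivAt) (hφ0 y)).deriv
    rw [show (fun y => 1 / φ y) = (fun x => (1:ℝ)) / φ from rfl, h]; ring
  have hψ2 : deriv (deriv (fun y => 1 / φ y)) x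
      = (-(deriv (deriv φ) x) * (φ x)^2 - (-(deriv φ x)) * (2 * φ x * deriv φ x)) / ((φ x)^2)^2 := by
    rw [hψ1]
    have hpow : HasDerivAt (fun y => (φ y)^2) (2 * φ x * deriv φ x) x := by
      have := ((hφ x).hasDerivAt).fun_pow 2
      simpa [mul_comm, mul_assoc, mul_left_comm] using this
    exact (((hφ' x).hasDerivAt).neg.div hpow (pow_ne_zero 2 (hφ0 x))).deriv
  simp only [hψ2, hlog2]
  have h := heig x
  have h0 := hφ0 x
  field_simp
  linear_combination (φ x) * h
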